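/- First mean value theorem for diamond-alpha integrals: let f and g be bounded and diamond-alpha integrable from a to b, with g nonnegative on [a,b], and let m = inf f and M = sup f on [a,b]. Then there exists K ∈ [m, M] with ∫ₐᵇ f(t)g(t) ⋄_α t = K ∫ₐᵇ g(t) ⋄_α t. -/

import Mathlib

open Set Filter Topology

attribute [local instance] Classical.propDecidable

/-- A partition `a = t₀ < t₁ < ⋯ < tₙ = b` of `[a,b]` with points in the time scale `T`. -/
structure TSPartition (T : Set ℝ) (a b : ℝ) where
  n : ℕ
  npos : 0 < n
  pt : ℕ → ℝ
  mem : ∀ i ≤ n, pt i ∈ T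
  mono : ∀ i < n, pt i < pt (i + 1)
  first : pt 0 = a
  last : pt n = b

/-- Upper Darboux diamond-alpha sum. -/
noncomputable def upperDSum (T : Set ℝ) (f : ℝ → ℝ) (α : ℝ) {a b : ℝ}
    (P : TSPartition T a b) : ℝ :=
  ∑ i ∈ Finset.range P.n,
    (α * sSup (f '' (T ∩ Set.Ico (P.pt i) (P.pt (i + 1)))) +
        (1 - α) * sSup (f '' (T ∩ Set.Ioc (P.pt i) (P.pt (i + 1))))) *
      (P.pt (i + 1) - P.pt i)

/-- Lower Darboux diamond-alpha sum. -/
noncomputable def lowerDSum (T : Set ℝ) (f : ℝ → ℝ) (α : ℝ) {a b : ℝ}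
    (P : TSPartition T a b) : ℝ :=
  ∑ i ∈ Finset.range P.n,
    (α * sInf (f '' (T ∩ Set.Ico (P.pt i) (P.pt (i + 1)))) +
        (1 - α) * sInf (f '' (T ∩ Set.Ioc (P.pt i) (P.pt (i + 1))))) *
      (P.pt (i + 1) - P.pt i)

/-- Upper Darboux diamond-alpha integral. -/
noncomputable def upperDIntegral (T : Set ℝ) (f : ℝ → ℝ) (α a b : ℝ) : ℝ :=
  sInf {x | ∃ P : TSPartition T a b, x = upperDSum T f α P}

/-- Lower Darboux diamond-alpha integral. -/
noncomputable def lowerDIntegral (T : Set ℝ) (f : ℝ → ℝ) (α a b : ℝ) : ℝ :=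
  sSup {x | ∃ P : TSPartition T a b, x = lowerDSum T f α P}

/-- Darboux diamond-alpha integrability: upper and lower integrals coincide. -/
def DiamondIntegrable (T : Set ℝ) (f : ℝ → ℝ) (α a b : ℝ) : Prop :=
  lowerDIntegral T f α a b = upperDIntegral T f α a b

/-- The Darboux diamond-alpha integral (the common value, taken as the upper integral). -/
noncomputable def diamondIntegral (T : Set ℝ) (f : ℝ → ℝ) (α a b : ℝ) : ℝ :=
  upperDIntegral T f α a b

namespace DMVT
open Pointwise

variable {T : Set ℝ} {a b : ℝ}

/-! ### Partition basics -/

theorem pt_lt_pt (P : TSPartition T a b) : ∀ {i j : ℕ}, i < j → j ≤ P.n → P.pt i < P.pt j := by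
  intro i j hij hj
  induction j with
  | zero => omega
  | succ k ih =>
    rcases Nat.lt_succ_iff_lt_or_eq.mp hij with h | h
    · exact (ih h (by omega)).trans (P.mono k (by omega))
    · subst h; exact P.mono i (by omega)

theorem pt_le_pt (P : TSPartition T a b) {i j : ℕ} (hij : i ≤ j) (hj : j ≤ P.n) :
    P.pt i ≤ P.pt j := by
  rcases eq_or_lt_of_le hij with h | h
  · subst h; exact le_refl _
  · exact (pt_lt_pt P h hj).le

theorem pt_mem_Icc (P : TSPartition T a b) {i : ℕ} (hi : i ≤ P.n) : P.pt i ∈ Set.Icc a b := by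
  constructor
  · have h := pt_le_pt P (Nat.zero_le i) hi; rwa [P.first] at h
  · have h := pt_le_pt P hi le_rfl; rwa [P.last] at h

theorem pt_inj (P : TSPartition T a b) {i j : ℕ} (hi : i ≤ P.n) (hj : j ≤ P.n)
    (h : P.pt i = P.pt j) : i = j := by
  by_contra hne
  rcases Nat.lt_or_ge i j with hlt | hge
  · exact absurd h (ne_of_lt (pt_lt_pt P hlt hj))
  · have : j < i := by omega
    exact absurd h.symm (ne_of_lt (pt_lt_pt P this hi))

/-- The trivial partition. -/
noncomputable def onePart (ha : a ∈ T) (hb : b ∈ T) (hab : a < b) : TSPartition T a b where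
  n := 1
  npos := one_pos
  pt := fun i => if i = 0 then a else b
  mem := by
    intro i _
    by_cases h : i = 0 <;> simp [h, ha, hb]
  mono := by
    intro i hi
    have : i = 0 := by omega
    simp [this, hab]
  first := by simp
  last := by simp

/-! ### Cell lemmas for a bounded function -/

variable {φ ψ : ℝ → ℝ} {C α : ℝ}

theorem img_ne {s : Set ℝ} (hne : s.Nonempty) : (φ '' s).Nonempty := hne.image φ

theorem img_bddAbove (hC : ∀ t ∈ T ∩ Set.Icc a b, |φ t| ≤ C) {s : Set ℝ}
    (hs : s ⊆ T ∩ Set.Icc a b) : BddAbove (φ '' s) := by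
  refine ⟨C, ?_⟩
  rintro z ⟨t, ht, rfl⟩
  exact (abs_le.1 (hC t (hs ht))).2

theorem img_bddBelow (hC : ∀ t ∈ T ∩ Set.Icc a b, |φ t| ≤ C) {s : Set ℝ}
    (hs : s ⊆ T ∩ Set.Icc a b) : BddBelow (φ '' s) := by
  refine ⟨-C, ?_⟩
  rintro z ⟨t, ht, rfl⟩
  exact (abs_le.1 (hC t (hs ht))).1

theorem sSup_img_le (hC : ∀ t ∈ T ∩ Set.Icc a b, |φ t| ≤ C) {s : Set ℝ}
    (hs : s ⊆ T ∩ Set.Icc a b) (hne : s.Nonempty) : sSup (φ '' s) ≤ C :=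
  csSup_le (img_ne hne) (by rintro z ⟨t, ht, rfl⟩; exact (abs_le.1 (hC t (hs ht))).2)

theorem neg_le_sInf_img (hC : ∀ t ∈ T ∩ Set.Icc a b, |φ t| ≤ C) {s : Set ℝ}
    (hs : s ⊆ T ∩ Set.Icc a b) (hne : s.Nonempty) : -C ≤ sInf (φ '' s) :=
  le_csInf (img_ne hne) (by rintro z ⟨t, ht, rfl⟩; exact (abs_le.1 (hC t (hs ht))).1)

theorem sInf_img_le_sSup_img (hC : ∀ t ∈ T ∩ Set.Icc a b, |φ t| ≤ C) {s : Set ℝ}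
    (hs : s ⊆ T ∩ Set.Icc a b) (hne : s.Nonempty) : sInf (φ '' s) ≤ sSup (φ '' s) :=
  csInf_le_csSup (img_ne hne) (img_bddBelow hC hs) (img_bddAbove hC hs)

theorem neg_le_sSup_img (hC : ∀ t ∈ T ∩ Set.Icc a b, |φ t| ≤ C) {s : Set ℝ}
    (hs : s ⊆ T ∩ Set.Icc a b) (hne : s.Nonempty) : -C ≤ sSup (φ '' s) :=
  (neg_le_sInf_img hC hs hne).trans (sInf_img_le_sSup_img hC hs hne)

theorem sInf_img_le (hC : ∀ t ∈ T ∩ Set.Icc a b, |φ t| ≤ C) {s : Set ℝ}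
    (hs : s ⊆ T ∩ Set.Icc a b) (hne : s.Nonempty) : sInf (φ '' s) ≤ C :=
  (sInf_img_le_sSup_img hC hs hne).trans (sSup_img_le hC hs hne)

/-- Upper piece. -/
noncomputable def pcU (T : Set ℝ) (φ : ℝ → ℝ) (α x y : ℝ) : ℝ :=
  (α * sSup (φ '' (T ∩ Set.Ico x y)) + (1 - α) * sSup (φ '' (T ∩ Set.Ioc x y))) * (y - x)

/-- Lower piece. -/
noncomputable def pcL (T : Set ℝ) (φ : ℝ → ℝ) (α x y : ℝ) : ℝ :=
  (α * sInf (φ '' (T ∩ Set.Ico x y)) + (1 - α) * sInf (φ '' (T ∩ Set.Ioc x y))) * (y - x)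

theorem upperDSum_eq (P : TSPartition T a b) :
    upperDSum T φ α P = ∑ i ∈ Finset.range P.n, pcU T φ α (P.pt i) (P.pt (i + 1)) := rfl

theorem lowerDSum_eq (P : TSPartition T a b) :
    lowerDSum T φ α P = ∑ i ∈ Finset.range P.n, pcL T φ α (P.pt i) (P.pt (i + 1)) := rfl

section Cells

variable {x y c : ℝ}

theorem Ico_cell_sub (hax : a ≤ x) (hyb : y ≤ b) : T ∩ Set.Ico x y ⊆ T ∩ Set.Icc a b :=
  fun t ⟨htT, ht⟩ => ⟨htT, ⟨hax.trans ht.1, ht.2.le.trans hyb⟩⟩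

theorem Ioc_cell_sub (hax : a ≤ x) (hyb : y ≤ b) : T ∩ Set.Ioc x y ⊆ T ∩ Set.Icc a b :=
  fun t ⟨htT, ht⟩ => ⟨htT, ⟨hax.trans ht.1.le, ht.2.trans hyb⟩⟩

theorem Ico_cell_ne (hx : x ∈ T) (hxy : x < y) : (T ∩ Set.Ico x y).Nonempty :=
  ⟨x, hx, le_refl x, hxy⟩

theorem Ioc_cell_ne (hy : y ∈ T) (hxy : x < y) : (T ∩ Set.Ioc x y).Nonempty :=
  ⟨y, hy, hxy, le_refl y⟩

theorem pcU_le (hC : ∀ t ∈ T ∩ Set.Icc a b, |φ t| ≤ C) (hα : α ∈ Set.Icc (0:ℝ) 1)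
    (hx : x ∈ T) (hy : y ∈ T) (hax : a ≤ x) (hxy : x < y) (hyb : y ≤ b) :
    pcU T φ α x y ≤ C * (y - x) := by
  have h1 := sSup_img_le hC (Ico_cell_sub hax hyb) (Ico_cell_ne hx hxy)
  have h2 := sSup_img_le hC (Ioc_cell_sub hax hyb) (Ioc_cell_ne hy hxy)
  have hα0 := hα.1; have hα1 := hα.2
  unfold pcU
  have : α * sSup (φ '' (T ∩ Set.Ico x y)) + (1 - α) * sSup (φ '' (T ∩ Set.Ioc x y)) ≤ C := by
    nlinarith
  nlinarith

theorem le_pcU (hC : ∀ t ∈ T ∩ Set.Icc a b, |φ t| ≤ C) (hα : α ∈ Set.Icc (0:ℝ) 1)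
    (hx : x ∈ T) (hy : y ∈ T) (hax : a ≤ x) (hxy : x < y) (hyb : y ≤ b) :
    -C * (y - x) ≤ pcU T φ α x y := by
  have h1 := neg_le_sSup_img hC (Ico_cell_sub hax hyb) (Ico_cell_ne hx hxy)
  have h2 := neg_le_sSup_img hC (Ioc_cell_sub hax hyb) (Ioc_cell_ne hy hxy)
  have hα0 := hα.1; have hα1 := hα.2
  unfold pcU
  have : -C ≤ α * sSup (φ '' (T ∩ Set.Ico x y)) + (1 - α) * sSup (φ '' (T ∩ Set.Ioc x y)) := by
    nlinarith
  nlinarith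

theorem pcL_le_pcU (hC : ∀ t ∈ T ∩ Set.Icc a b, |φ t| ≤ C) (hα : α ∈ Set.Icc (0:ℝ) 1)
    (hx : x ∈ T) (hy : y ∈ T) (hax : a ≤ x) (hxy : x < y) (hyb : y ≤ b) :
    pcL T φ α x y ≤ pcU T φ α x y := by
  have h1 := sInf_img_le_sSup_img hC (Ico_cell_sub hax hyb) (Ico_cell_ne hx hxy)
  have h2 := sInf_img_le_sSup_img hC (Ioc_cell_sub hax hyb) (Ioc_cell_ne hy hxy)
  have hα0 := hα.1; have hα1 := hα.2
  unfold pcU pcL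
  apply mul_le_mul_of_nonneg_right _ (by linarith)
  have := mul_le_mul_of_nonneg_left h1 hα0
  have := mul_le_mul_of_nonneg_left h2 (by linarith : (0:ℝ) ≤ 1 - α)
  linarith

/-- Subadditivity of the upper piece under splitting. -/
theorem pcU_split (hC : ∀ t ∈ T ∩ Set.Icc a b, |φ t| ≤ C) (hα : α ∈ Set.Icc (0:ℝ) 1)
    (hx : x ∈ T) (hc : c ∈ T) (hy : y ∈ T) (hax : a ≤ x) (hxc : x < c) (hcy : c < y)
    (hyb : y ≤ b) : pcU T φ α x c + pcU T φ α c y ≤ pcU T φ α x y := by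
  have hac : a ≤ c := hax.trans hxc.le
  have hcb : c ≤ b := hcy.le.trans hyb
  have hxy : x < y := hxc.trans hcy
  have bddIco := img_bddAbove (φ := φ) hC (Ico_cell_sub (T := T) hax hyb)
  have bddIoc := img_bddAbove (φ := φ) hC (Ioc_cell_sub (T := T) hax hyb)
  have h1 : sSup (φ '' (T ∩ Set.Ico x c)) ≤ sSup (φ '' (T ∩ Set.Ico x y)) :=
    csSup_le_csSup bddIco (img_ne (Ico_cell_ne hx hxc))
      (Set.image_mono (Set.inter_subset_inter_right _ (Set.Ico_subset_Ico le_rfl hcy.le)))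
  have h2 : sSup (φ '' (T ∩ Set.Ico c y)) ≤ sSup (φ '' (T ∩ Set.Ico x y)) :=
    csSup_le_csSup bddIco (img_ne (Ico_cell_ne hc hcy))
      (Set.image_mono (Set.inter_subset_inter_right _ (Set.Ico_subset_Ico hxc.le le_rfl)))
  have h3 : sSup (φ '' (T ∩ Set.Ioc x c)) ≤ sSup (φ '' (T ∩ Set.Ioc x y)) :=
    csSup_le_csSup bddIoc (img_ne (Ioc_cell_ne hc hxc))
      (Set.image_mono (Set.inter_subset_inter_right _ (Set.Ioc_subset_Ioc le_rfl hcy.le)))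
  have h4 : sSup (φ '' (T ∩ Set.Ioc c y)) ≤ sSup (φ '' (T ∩ Set.Ioc x y)) :=
    csSup_le_csSup bddIoc (img_ne (Ioc_cell_ne hy hcy))
      (Set.image_mono (Set.inter_subset_inter_right _ (Set.Ioc_subset_Ioc hxc.le le_rfl)))
  have hα0 := hα.1; have hα1 := hα.2
  unfold pcU
  set A := sSup (φ '' (T ∩ Set.Ico x y))
  set B := sSup (φ '' (T ∩ Set.Ioc x y))
  have e1 : (α * sSup (φ '' (T ∩ Set.Ico x c)) + (1 - α) * sSup (φ '' (T ∩ Set.Ioc x c))) *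
      (c - x) ≤ (α * A + (1 - α) * B) * (c - x) := by
    apply mul_le_mul_of_nonneg_right _ (by linarith)
    have := mul_le_mul_of_nonneg_left h1 hα0
    have := mul_le_mul_of_nonneg_left h3 (by linarith : (0:ℝ) ≤ 1 - α)
    linarith
  have e2 : (α * sSup (φ '' (T ∩ Set.Ico c y)) + (1 - α) * sSup (φ '' (T ∩ Set.Ioc c y))) *
      (y - c) ≤ (α * A + (1 - α) * B) * (y - c) := by
    apply mul_le_mul_of_nonneg_right _ (by linarith)
    have := mul_le_mul_of_nonneg_left h2 hα0
    have := mul_le_mul_of_nonneg_left h4 (by linarith : (0:ℝ) ≤ 1 - α)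
    linarith
  have : (α * A + (1 - α) * B) * (c - x) + (α * A + (1 - α) * B) * (y - c) =
      (α * A + (1 - α) * B) * (y - x) := by ring
  linarith

end Cells

/-! ### Block and refinement lemmas -/

theorem sum_pcU_block (hC : ∀ t ∈ T ∩ Set.Icc a b, |φ t| ≤ C) (hα : α ∈ Set.Icc (0:ℝ) 1)
    (R : TSPartition T a b) {p q : ℕ} (hpq : p < q) (hq : q ≤ R.n) :
    ∑ j ∈ Finset.Ico p q, pcU T φ α (R.pt j) (R.pt (j + 1)) ≤ pcU T φ α (R.pt p) (R.pt q) := by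
  induction q, hpq using Nat.le_induction with
  | base =>
    rw [show Finset.Ico p (p+1) = {p} by rw [Finset.Ico_add_one_right_eq_Icc, Finset.Icc_self]]
    simp
  | succ q hpq ih =>
    have hq' : q ≤ R.n := by omega
    rw [Finset.sum_Ico_succ_top (by omega)]
    have h1 := ih hq'
    have h2 : pcU T φ α (R.pt p) (R.pt q) + pcU T φ α (R.pt q) (R.pt (q + 1)) ≤
        pcU T φ α (R.pt p) (R.pt (q + 1)) := by
      apply pcU_split hC hα (R.mem p (by omega)) (R.mem q hq') (R.mem (q+1) hq)
        (pt_mem_Icc R (show p ≤ R.n by omega)).1 (pt_lt_pt R hpq hq') (R.mono q (by omega))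
        (pt_mem_Icc R hq).2
    linarith

/-- `R` refines `P`: every point of `P` is a point of `R`. -/
def Refines (R P : TSPartition T a b) : Prop := ∀ i ≤ P.n, ∃ j ≤ R.n, R.pt j = P.pt i

theorem Refines.trans {R Q P : TSPartition T a b} (h1 : Refines R Q) (h2 : Refines Q P) :
    Refines R P := by
  intro i hi
  obtain ⟨j, hj, hje⟩ := h2 i hi
  obtain ⟨k, hk, hke⟩ := h1 j hj
  exact ⟨k, hk, hke.trans hje⟩

theorem upperDSum_le_of_refines (hC : ∀ t ∈ T ∩ Set.Icc a b, |φ t| ≤ C)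
    (hα : α ∈ Set.Icc (0:ℝ) 1) {R P : TSPartition T a b} (h : Refines R P) :
    upperDSum T φ α R ≤ upperDSum T φ α P := by
  classical
  set k : ℕ → ℕ := fun i => if h' : i ≤ P.n then (h i h').choose else 0 with hk
  have hkn : ∀ i (hi : i ≤ P.n), k i ≤ R.n ∧ R.pt (k i) = P.pt i := by
    intro i hi
    simp only [hk, dif_pos hi]
    exact ⟨(h i hi).choose_spec.1, (h i hi).choose_spec.2⟩
  have hk0 : k 0 = 0 := by
    have h0 := hkn 0 (Nat.zero_le _)
    apply pt_inj R h0.1 (Nat.zero_le _)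
    rw [h0.2, P.first, R.first]
  have hkmono : ∀ i j, i < j → j ≤ P.n → k i < k j := by
    intro i j hij hj
    have hi := hkn i (by omega)
    have hjj := hkn j hj
    by_contra hcon
    have : R.pt (k j) ≤ R.pt (k i) := pt_le_pt R (by omega) hi.1
    rw [hi.2, hjj.2] at this
    exact absurd this (not_le.2 (pt_lt_pt P hij hj))
  have hklast : k P.n = R.n := by
    have hl := hkn P.n le_rfl
    apply pt_inj R hl.1 le_rfl
    rw [hl.2, P.last, R.last]
  have main : ∀ m ≤ P.n, ∑ j ∈ Finset.Ico 0 (k m), pcU T φ α (R.pt j) (R.pt (j + 1)) ≤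
      ∑ i ∈ Finset.range m, pcU T φ α (P.pt i) (P.pt (i + 1)) := by
    intro m
    induction m with
    | zero => intro _; rw [hk0]; simp
    | succ m ih =>
      intro hm
      have hmono := hkmono m (m+1) (by omega) hm
      have hm' : m ≤ P.n := by omega
      rw [← Finset.sum_Ico_consecutive _ (Nat.zero_le (k m)) hmono.le,
        Finset.sum_range_succ]
      have hb := sum_pcU_block hC hα R hmono (hkn (m+1) hm).1
      rw [(hkn m hm').2, (hkn (m+1) hm).2] at hb
      exact add_le_add (ih hm') hb
  have := main P.n le_rfl
  rw [hklast] at this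
  rw [upperDSum_eq (φ := φ), upperDSum_eq (φ := φ), ← Finset.range_eq_Ico] at *
  exact this

/-! ### Duality between upper and lower sums -/

theorem img_neg (φ : ℝ → ℝ) (s : Set ℝ) : (fun t => -φ t) '' s = -(φ '' s) := by
  ext z
  simp only [Set.mem_image, Set.mem_neg]
  constructor
  · rintro ⟨t, ht, rfl⟩; exact ⟨t, ht, by ring⟩
  · rintro ⟨t, ht, h⟩; exact ⟨t, ht, by linarith⟩

theorem sInf_img_eq_neg (φ : ℝ → ℝ) (s : Set ℝ) :
    sInf (φ '' s) = -sSup ((fun t => -φ t) '' s) := by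
  rw [img_neg, Real.sInf_def]

theorem lowerDSum_eq_neg (P : TSPartition T a b) :
    lowerDSum T φ α P = -upperDSum T (fun t => -φ t) α P := by
  rw [lowerDSum_eq, upperDSum_eq, ← Finset.sum_neg_distrib]
  apply Finset.sum_congr rfl
  intro i _
  unfold pcL pcU
  rw [sInf_img_eq_neg, sInf_img_eq_neg]
  ring

theorem lowerDIntegral_eq_neg (φ : ℝ → ℝ) (α : ℝ) :
    lowerDIntegral T φ α a b = -upperDIntegral T (fun t => -φ t) α a b := by
  unfold lowerDIntegral upperDIntegral
  have hset : {x | ∃ P : TSPartition T a b, x = lowerDSum T φ α P} =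
      -{x | ∃ P : TSPartition T a b, x = upperDSum T (fun t => -φ t) α P} := by
    ext z
    simp only [Set.mem_setOf_eq, Set.mem_neg]
    constructor
    · rintro ⟨P, rfl⟩; exact ⟨P, by rw [lowerDSum_eq_neg]; ring⟩
    · rintro ⟨P, hP⟩; exact ⟨P, by rw [lowerDSum_eq_neg, ← hP, neg_neg]⟩
  rw [hset]
  have := Real.sInf_def {x | ∃ P : TSPartition T a b, x = upperDSum T (fun t => -φ t) α P}
  linarith

/-! ### Partition from a finite set of points -/

noncomputable def ofFinset (S : Finset ℝ) (hST : ↑S ⊆ T) (haS : a ∈ S) (hbS : b ∈ S)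
    (hSab : ↑S ⊆ Set.Icc a b) (hab : a < b) : TSPartition T a b where
  n := S.card - 1
  npos := by
    have : 1 < S.card := Finset.one_lt_card.2 ⟨a, haS, b, hbS, ne_of_lt hab⟩
    omega
  pt := fun i => if h : i < S.card then S.orderEmbOfFin rfl ⟨i, h⟩ else b
  mem := by
    intro i hi
    have hcard : 1 < S.card := Finset.one_lt_card.2 ⟨a, haS, b, hbS, ne_of_lt hab⟩
    have h : i < S.card := by omega
    beta_reduce
    rw [dif_pos h]
    exact hST (Finset.orderEmbOfFin_mem S rfl ⟨i, h⟩)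
  mono := by
    intro i hi
    have hcard : 1 < S.card := Finset.one_lt_card.2 ⟨a, haS, b, hbS, ne_of_lt hab⟩
    have h1 : i < S.card := by omega
    have h2 : i + 1 < S.card := by omega
    beta_reduce
    rw [dif_pos h1, dif_pos h2]
    exact (S.orderEmbOfFin rfl).strictMono (by simp [Fin.mk_lt_mk])
  first := by
    have hcard : 1 < S.card := Finset.one_lt_card.2 ⟨a, haS, b, hbS, ne_of_lt hab⟩
    have h0 : 0 < S.card := by omega
    beta_reduce
    rw [dif_pos h0]
    rw [Finset.orderEmbOfFin_zero rfl h0]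
    apply le_antisymm
    · exact S.min'_le a haS
    · exact (hSab (S.min'_mem ⟨a, haS⟩)).1
  last := by
    have hcard : 1 < S.card := Finset.one_lt_card.2 ⟨a, haS, b, hbS, ne_of_lt hab⟩
    have h0 : 0 < S.card := by omega
    have h : S.card - 1 < S.card := by omega
    beta_reduce
    rw [dif_pos h]
    rw [Finset.orderEmbOfFin_last rfl h0]
    apply le_antisymm
    · exact (hSab (S.max'_mem ⟨a, haS⟩)).2
    · exact S.le_max' b hbS

theorem ofFinset_refines (S : Finset ℝ) (hST : ↑S ⊆ T) (haS : a ∈ S) (hbS : b ∈ S)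
    (hSab : ↑S ⊆ Set.Icc a b) (hab : a < b) (P : TSPartition T a b)
    (hP : ∀ i ≤ P.n, P.pt i ∈ S) : Refines (ofFinset S hST haS hbS hSab hab) P := by
  intro i hi
  have hx : P.pt i ∈ S := hP i hi
  have hcard : 1 < S.card := Finset.one_lt_card.2 ⟨a, haS, b, hbS, ne_of_lt hab⟩
  set j : Fin S.card := (S.orderIsoOfFin rfl).symm ⟨P.pt i, hx⟩ with hj
  refine ⟨(j : ℕ), by have := j.isLt; show (j:ℕ) ≤ S.card - 1; omega, ?_⟩
  show (if h : (j:ℕ) < S.card then S.orderEmbOfFin rfl ⟨(j:ℕ), h⟩ else b) = P.pt i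
  rw [dif_pos j.isLt]
  have : S.orderEmbOfFin rfl j = ((S.orderIsoOfFin rfl) j : ℝ) :=
    (Finset.coe_orderIsoOfFin_apply S rfl j).symm
  simp only [Fin.eta]
  rw [this, hj]
  simp

/-- The finite set of points of a partition. -/
noncomputable def ptsFinset (P : TSPartition T a b) : Finset ℝ :=
  (Finset.range (P.n + 1)).image P.pt

theorem ptsFinset_subset_T (P : TSPartition T a b) : ↑(ptsFinset P) ⊆ T := by
  intro x hx
  simp only [ptsFinset, Finset.coe_image, Set.mem_image, Finset.coe_range, Set.mem_Iio] at hx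
  obtain ⟨i, hi, rfl⟩ := hx
  exact P.mem i (by omega)

theorem ptsFinset_subset_Icc (P : TSPartition T a b) : ↑(ptsFinset P) ⊆ Set.Icc a b := by
  intro x hx
  simp only [ptsFinset, Finset.coe_image, Set.mem_image, Finset.coe_range, Set.mem_Iio] at hx
  obtain ⟨i, hi, rfl⟩ := hx
  exact pt_mem_Icc P (by omega)

theorem a_mem_ptsFinset (P : TSPartition T a b) : a ∈ ptsFinset P := by
  simp only [ptsFinset, Finset.mem_image]
  exact ⟨0, by simp [P.npos], P.first⟩

theorem b_mem_ptsFinset (P : TSPartition T a b) : b ∈ ptsFinset P := by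
  simp only [ptsFinset, Finset.mem_image]
  exact ⟨P.n, by simp, P.last⟩

theorem exists_common_refinement (hab : a < b) (P Q : TSPartition T a b) :
    ∃ R : TSPartition T a b, Refines R P ∧ Refines R Q := by
  set S := ptsFinset P ∪ ptsFinset Q with hS
  have hST : ↑S ⊆ T := by
    rw [hS, Finset.coe_union]
    exact Set.union_subset (ptsFinset_subset_T P) (ptsFinset_subset_T Q)
  have haS : a ∈ S := Finset.mem_union_left _ (a_mem_ptsFinset P)
  have hbS : b ∈ S := Finset.mem_union_left _ (b_mem_ptsFinset P)
  have hSab : ↑S ⊆ Set.Icc a b := by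
    rw [hS, Finset.coe_union]
    exact Set.union_subset (ptsFinset_subset_Icc P) (ptsFinset_subset_Icc Q)
  refine ⟨ofFinset S hST haS hbS hSab hab, ?_, ?_⟩
  · apply ofFinset_refines
    intro i hi
    apply Finset.mem_union_left
    simp only [ptsFinset, Finset.mem_image]
    exact ⟨i, by simp; omega, rfl⟩
  · apply ofFinset_refines
    intro i hi
    apply Finset.mem_union_right
    simp only [ptsFinset, Finset.mem_image]
    exact ⟨i, by simp; omega, rfl⟩

theorem exists_common_refinement4 (hab : a < b) (P₁ P₂ P₃ P₄ : TSPartition T a b) :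
    ∃ R : TSPartition T a b, Refines R P₁ ∧ Refines R P₂ ∧ Refines R P₃ ∧ Refines R P₄ := by
  obtain ⟨R₁, h1, h2⟩ := exists_common_refinement hab P₁ P₂
  obtain ⟨R₂, h3, h4⟩ := exists_common_refinement hab P₃ P₄
  obtain ⟨R, hR1, hR2⟩ := exists_common_refinement hab R₁ R₂
  exact ⟨R, hR1.trans h1, hR1.trans h2, hR2.trans h3, hR2.trans h4⟩

/-! ### Bounds on sums and basic integral facts -/

theorem sum_delta (P : TSPartition T a b) :
    ∑ i ∈ Finset.range P.n, (P.pt (i + 1) - P.pt i) = b - a := by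
  rw [Finset.sum_range_sub, P.first, P.last]

theorem upperDSum_le (hC : ∀ t ∈ T ∩ Set.Icc a b, |φ t| ≤ C) (hα : α ∈ Set.Icc (0:ℝ) 1)
    (P : TSPartition T a b) : upperDSum T φ α P ≤ C * (b - a) := by
  rw [upperDSum_eq, ← sum_delta P, Finset.mul_sum]
  apply Finset.sum_le_sum
  intro i hi
  rw [Finset.mem_range] at hi
  exact pcU_le hC hα (P.mem i (by omega)) (P.mem (i+1) (by omega))
    (pt_mem_Icc P (show i ≤ P.n by omega)).1 (P.mono i hi)
    (pt_mem_Icc P (show i + 1 ≤ P.n by omega)).2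

theorem le_upperDSum (hC : ∀ t ∈ T ∩ Set.Icc a b, |φ t| ≤ C) (hα : α ∈ Set.Icc (0:ℝ) 1)
    (P : TSPartition T a b) : -C * (b - a) ≤ upperDSum T φ α P := by
  rw [upperDSum_eq, ← sum_delta P, Finset.mul_sum]
  apply Finset.sum_le_sum
  intro i hi
  rw [Finset.mem_range] at hi
  exact le_pcU hC hα (P.mem i (by omega)) (P.mem (i+1) (by omega))
    (pt_mem_Icc P (show i ≤ P.n by omega)).1 (P.mono i hi)
    (pt_mem_Icc P (show i + 1 ≤ P.n by omega)).2

theorem lowerDSum_le_upperDSum (hC : ∀ t ∈ T ∩ Set.Icc a b, |φ t| ≤ C)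
    (hα : α ∈ Set.Icc (0:ℝ) 1) (P : TSPartition T a b) :
    lowerDSum T φ α P ≤ upperDSum T φ α P := by
  rw [lowerDSum_eq, upperDSum_eq]
  apply Finset.sum_le_sum
  intro i hi
  rw [Finset.mem_range] at hi
  exact pcL_le_pcU hC hα (P.mem i (by omega)) (P.mem (i+1) (by omega))
    (pt_mem_Icc P (show i ≤ P.n by omega)).1 (P.mono i hi)
    (pt_mem_Icc P (show i + 1 ≤ P.n by omega)).2

theorem USet_nonempty (ha : a ∈ T) (hb : b ∈ T) (hab : a < b) (φ : ℝ → ℝ) (α : ℝ) :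
    {x | ∃ P : TSPartition T a b, x = upperDSum T φ α P}.Nonempty :=
  ⟨upperDSum T φ α (onePart ha hb hab), onePart ha hb hab, rfl⟩

theorem USet_bddBelow (hC : ∀ t ∈ T ∩ Set.Icc a b, |φ t| ≤ C) (hα : α ∈ Set.Icc (0:ℝ) 1) :
    BddBelow {x | ∃ P : TSPartition T a b, x = upperDSum T φ α P} := by
  refine ⟨-C * (b - a), ?_⟩
  rintro x ⟨P, rfl⟩
  exact le_upperDSum hC hα P

theorem upperDIntegral_le_upperDSum (hC : ∀ t ∈ T ∩ Set.Icc a b, |φ t| ≤ C)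
    (hα : α ∈ Set.Icc (0:ℝ) 1) (P : TSPartition T a b) :
    upperDIntegral T φ α a b ≤ upperDSum T φ α P :=
  csInf_le (USet_bddBelow hC hα) ⟨P, rfl⟩

theorem bound_neg (hC : ∀ t ∈ T ∩ Set.Icc a b, |φ t| ≤ C) :
    ∀ t ∈ T ∩ Set.Icc a b, |(fun t => -φ t) t| ≤ C := by
  intro t ht
  simp only [abs_neg]
  exact hC t ht

theorem lowerDSum_le_lowerDIntegral (hC : ∀ t ∈ T ∩ Set.Icc a b, |φ t| ≤ C)
    (hα : α ∈ Set.Icc (0:ℝ) 1) (P : TSPartition T a b) :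
    lowerDSum T φ α P ≤ lowerDIntegral T φ α a b := by
  rw [lowerDIntegral_eq_neg, lowerDSum_eq_neg]
  have := upperDIntegral_le_upperDSum (bound_neg hC) hα P
  linarith

theorem lowerDIntegral_le_upperDIntegral (ha : a ∈ T) (hb : b ∈ T) (hab : a < b)
    (hC : ∀ t ∈ T ∩ Set.Icc a b, |φ t| ≤ C) (hα : α ∈ Set.Icc (0:ℝ) 1) :
    lowerDIntegral T φ α a b ≤ upperDIntegral T φ α a b := by
  rw [lowerDIntegral_eq_neg]
  rw [show upperDIntegral T φ α a b = sInf {x | ∃ P : TSPartition T a b,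
    x = upperDSum T φ α P} from rfl]
  apply le_csInf (USet_nonempty ha hb hab φ α)
  rintro x ⟨P, rfl⟩
  rw [neg_le]
  rw [show upperDIntegral T (fun t => -φ t) α a b = sInf {x | ∃ P : TSPartition T a b,
    x = upperDSum T (fun t => -φ t) α P} from rfl]
  apply le_csInf (USet_nonempty ha hb hab _ α)
  rintro y ⟨Q, rfl⟩
  obtain ⟨R, hRP, hRQ⟩ := exists_common_refinement hab P Q
  have h1 : upperDSum T (fun t => -φ t) α R ≤ upperDSum T (fun t => -φ t) α Q :=
    upperDSum_le_of_refines (bound_neg hC) hα hRQ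
  have h2 : upperDSum T φ α R ≤ upperDSum T φ α P :=
    upperDSum_le_of_refines hC hα hRP
  have h3 : lowerDSum T φ α R ≤ upperDSum T φ α R := lowerDSum_le_upperDSum hC hα R
  rw [lowerDSum_eq_neg] at h3
  linarith

/-! ### Monotonicity in the integrand -/

theorem upperDSum_mono (hCψ : ∀ t ∈ T ∩ Set.Icc a b, |ψ t| ≤ C)
    (hφψ : ∀ t ∈ T ∩ Set.Icc a b, φ t ≤ ψ t) (hα : α ∈ Set.Icc (0:ℝ) 1)
    (P : TSPartition T a b) : upperDSum T φ α P ≤ upperDSum T ψ α P := by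
  rw [upperDSum_eq, upperDSum_eq]
  apply Finset.sum_le_sum
  intro i hi
  rw [Finset.mem_range] at hi
  have hxT := P.mem i (by omega)
  have hyT := P.mem (i+1) (by omega)
  have hax := (pt_mem_Icc P (show i ≤ P.n by omega)).1
  have hyb := (pt_mem_Icc P (show i + 1 ≤ P.n by omega)).2
  have hxy := P.mono i hi
  have key : ∀ s : Set ℝ, s ⊆ T ∩ Set.Icc a b → s.Nonempty →
      sSup (φ '' s) ≤ sSup (ψ '' s) := by
    intro s hs hne
    apply csSup_le (img_ne hne)
    rintro z ⟨t, ht, rfl⟩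
    exact (hφψ t (hs ht)).trans (le_csSup (img_bddAbove hCψ hs) ⟨t, ht, rfl⟩)
  have h1 := key _ (Ico_cell_sub hax hyb) (Ico_cell_ne hxT hxy)
  have h2 := key _ (Ioc_cell_sub hax hyb) (Ioc_cell_ne hyT hxy)
  unfold pcU
  apply mul_le_mul_of_nonneg_right _ (by linarith)
  have := mul_le_mul_of_nonneg_left h1 hα.1
  have := mul_le_mul_of_nonneg_left h2 (by have := hα.2; linarith : (0:ℝ) ≤ 1 - α)
  linarith

theorem upperDIntegral_mono (ha : a ∈ T) (hb : b ∈ T) (hab : a < b)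
    {Cφ Cψ : ℝ} (hCφ : ∀ t ∈ T ∩ Set.Icc a b, |φ t| ≤ Cφ)
    (hCψ : ∀ t ∈ T ∩ Set.Icc a b, |ψ t| ≤ Cψ)
    (hφψ : ∀ t ∈ T ∩ Set.Icc a b, φ t ≤ ψ t) (hα : α ∈ Set.Icc (0:ℝ) 1) :
    upperDIntegral T φ α a b ≤ upperDIntegral T ψ α a b := by
  rw [show upperDIntegral T ψ α a b = sInf {x | ∃ P : TSPartition T a b,
    x = upperDSum T ψ α P} from rfl]
  apply le_csInf (USet_nonempty ha hb hab ψ α)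
  rintro x ⟨P, rfl⟩
  exact (upperDIntegral_le_upperDSum hCφ hα P).trans (upperDSum_mono hCψ hφψ hα P)

theorem lowerDIntegral_mono (ha : a ∈ T) (hb : b ∈ T) (hab : a < b)
    {Cφ Cψ : ℝ} (hCφ : ∀ t ∈ T ∩ Set.Icc a b, |φ t| ≤ Cφ)
    (hCψ : ∀ t ∈ T ∩ Set.Icc a b, |ψ t| ≤ Cψ)
    (hφψ : ∀ t ∈ T ∩ Set.Icc a b, φ t ≤ ψ t) (hα : α ∈ Set.Icc (0:ℝ) 1) :
    lowerDIntegral T φ α a b ≤ lowerDIntegral T ψ α a b := by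
  rw [lowerDIntegral_eq_neg, lowerDIntegral_eq_neg]
  have := upperDIntegral_mono (ψ := fun t => -φ t) ha hb hab (bound_neg hCψ) (bound_neg hCφ)
    (fun t ht => by simp only [neg_le_neg_iff]; exact hφψ t ht) hα
  linarith

/-! ### Scaling -/

theorem upperDSum_const_mul {c : ℝ} (hc : 0 ≤ c) (φ : ℝ → ℝ) (P : TSPartition T a b) :
    upperDSum T (fun t => c * φ t) α P = c * upperDSum T φ α P := by
  rw [upperDSum_eq, upperDSum_eq, Finset.mul_sum]
  apply Finset.sum_congr rfl
  intro i _
  have key : ∀ s : Set ℝ, sSup ((fun t => c * φ t) '' s) = c * sSup (φ '' s) := by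
    intro s
    have h1 : (fun t => c * φ t) '' s = c • (φ '' s) := by
      rw [← Set.image_smul, ← Set.image_comp]
      apply Set.image_congr
      intro t _
      simp [smul_eq_mul]
    rw [h1, Real.sSup_smul_of_nonneg hc, smul_eq_mul]
  unfold pcU
  rw [key, key]
  ring

theorem upperDIntegral_const_mul (ha : a ∈ T) (hb : b ∈ T) (hab : a < b) {c : ℝ} (hc : 0 ≤ c)
    (φ : ℝ → ℝ) (α : ℝ) :
    upperDIntegral T (fun t => c * φ t) α a b = c * upperDIntegral T φ α a b := by
  unfold upperDIntegral
  have hset : {x | ∃ P : TSPartition T a b, x = upperDSum T (fun t => c * φ t) α P} =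
      c • {x | ∃ P : TSPartition T a b, x = upperDSum T φ α P} := by
    ext z
    simp only [Set.mem_setOf_eq, Set.mem_smul_set, smul_eq_mul]
    constructor
    · rintro ⟨P, rfl⟩
      exact ⟨upperDSum T φ α P, ⟨P, rfl⟩, (upperDSum_const_mul hc φ P).symm⟩
    · rintro ⟨w, ⟨P, rfl⟩, rfl⟩
      exact ⟨P, (upperDSum_const_mul hc φ P).symm⟩
  rw [hset, Real.sInf_smul_of_nonneg hc, smul_eq_mul]

theorem const_mul_integrals (ha : a ∈ T) (hb : b ∈ T) (hab : a < b) {g : ℝ → ℝ}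
    (hg : DiamondIntegrable T g α a b) (c : ℝ) :
    upperDIntegral T (fun t => c * g t) α a b = c * upperDIntegral T g α a b ∧
      lowerDIntegral T (fun t => c * g t) α a b = c * upperDIntegral T g α a b := by
  have hgl : lowerDIntegral T g α a b = upperDIntegral T g α a b := hg
  have hgd : lowerDIntegral T g α a b = -upperDIntegral T (fun t => -g t) α a b :=
    lowerDIntegral_eq_neg g α
  rcases le_or_gt 0 c with hc | hc
  · constructor
    · exact upperDIntegral_const_mul ha hb hab hc g α
    · rw [lowerDIntegral_eq_neg]
      have he : (fun t => -(c * g t)) = (fun t => c * (-g t)) := by funext t; ring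
      rw [he, upperDIntegral_const_mul ha hb hab hc (fun t => -g t) α]
      have : upperDIntegral T (fun t => -g t) α a b = -lowerDIntegral T g α a b := by
        linarith
      rw [this]
      linear_combination c * hgl
  · have hc' : (0:ℝ) ≤ -c := by linarith
    constructor
    · have he : (fun t => c * g t) = (fun t => (-c) * (-g t)) := by funext t; ring
      rw [he, upperDIntegral_const_mul ha hb hab hc' (fun t => -g t) α]
      have : upperDIntegral T (fun t => -g t) α a b = -lowerDIntegral T g α a b := by
        linarith
      rw [this]
      linear_combination c * hgl
    · rw [lowerDIntegral_eq_neg]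
      have he : (fun t => -(c * g t)) = (fun t => (-c) * g t) := by funext t; ring
      rw [he, upperDIntegral_const_mul ha hb hab hc' g α]
      ring

/-! ### Nonnegativity -/

theorem lowerDIntegral_nonneg (ha : a ∈ T) (hb : b ∈ T) (hab : a < b) {g : ℝ → ℝ}
    (hC : ∀ t ∈ T ∩ Set.Icc a b, |g t| ≤ C) (hα : α ∈ Set.Icc (0:ℝ) 1)
    (hg0 : ∀ t ∈ T ∩ Set.Icc a b, 0 ≤ g t) : 0 ≤ lowerDIntegral T g α a b := by
  refine le_trans ?_ (lowerDSum_le_lowerDIntegral hC hα (onePart ha hb hab))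
  rw [lowerDSum_eq]
  apply Finset.sum_nonneg
  intro i hi
  rw [Finset.mem_range] at hi
  set P := onePart ha hb hab
  have hxT := P.mem i (by omega)
  have hyT := P.mem (i+1) (by omega)
  have hax := (pt_mem_Icc P (show i ≤ P.n by omega)).1
  have hyb := (pt_mem_Icc P (show i + 1 ≤ P.n by omega)).2
  have hxy := P.mono i hi
  have key : ∀ s : Set ℝ, s ⊆ T ∩ Set.Icc a b → s.Nonempty → 0 ≤ sInf (g '' s) := by
    intro s hs hne
    apply le_csInf (img_ne hne)
    rintro z ⟨t, ht, rfl⟩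
    exact hg0 t (hs ht)
  have h1 := key _ (Ico_cell_sub hax hyb) (Ico_cell_ne hxT hxy)
  have h2 := key _ (Ioc_cell_sub hax hyb) (Ioc_cell_ne hyT hxy)
  unfold pcL
  have hα0 := hα.1; have hα1 := hα.2
  apply mul_nonneg _ (by linarith)
  have := mul_nonneg hα0 h1
  have := mul_nonneg (by linarith : (0:ℝ) ≤ 1 - α) h2
  linarith

/-! ### Oscillation of a product -/

theorem osc_mul {f g : ℝ → ℝ} {Cf Cg : ℝ}
    (hCf : ∀ t ∈ T ∩ Set.Icc a b, |f t| ≤ Cf) (hCg : ∀ t ∈ T ∩ Set.Icc a b, |g t| ≤ Cg)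
    {s : Set ℝ} (hs : s ⊆ T ∩ Set.Icc a b) (hne : s.Nonempty) :
    sSup ((fun t => f t * g t) '' s) - sInf ((fun t => f t * g t) '' s) ≤
      Cg * (sSup (f '' s) - sInf (f '' s)) + Cf * (sSup (g '' s) - sInf (g '' s)) := by
  obtain ⟨t₀, ht₀⟩ := hne
  have hCf0 : 0 ≤ Cf := (abs_nonneg _).trans (hCf t₀ (hs ht₀))
  have hCg0 : 0 ≤ Cg := (abs_nonneg _).trans (hCg t₀ (hs ht₀))
  set D := Cg * (sSup (f '' s) - sInf (f '' s)) + Cf * (sSup (g '' s) - sInf (g '' s)) with hD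
  have key : ∀ u ∈ s, ∀ v ∈ s, f u * g u - f v * g v ≤ D := by
    intro u hu v hv
    have hfu : |f u| ≤ Cf := hCf u (hs hu)
    have hgv : |g v| ≤ Cg := hCg v (hs hv)
    have hgus : g u ≤ sSup (g '' s) := le_csSup (img_bddAbove hCg hs) ⟨u, hu, rfl⟩
    have hgvs : g v ≤ sSup (g '' s) := le_csSup (img_bddAbove hCg hs) ⟨v, hv, rfl⟩
    have hgui : sInf (g '' s) ≤ g u := csInf_le (img_bddBelow hCg hs) ⟨u, hu, rfl⟩
    have hgvi : sInf (g '' s) ≤ g v := csInf_le (img_bddBelow hCg hs) ⟨v, hv, rfl⟩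
    have hfus : f u ≤ sSup (f '' s) := le_csSup (img_bddAbove hCf hs) ⟨u, hu, rfl⟩
    have hfvs : f v ≤ sSup (f '' s) := le_csSup (img_bddAbove hCf hs) ⟨v, hv, rfl⟩
    have hfui : sInf (f '' s) ≤ f u := csInf_le (img_bddBelow hCf hs) ⟨u, hu, rfl⟩
    have hfvi : sInf (f '' s) ≤ f v := csInf_le (img_bddBelow hCf hs) ⟨v, hv, rfl⟩
    have habs1 : |g u - g v| ≤ sSup (g '' s) - sInf (g '' s) :=
      abs_le.2 ⟨by linarith, by linarith⟩
    have habs2 : |f u - f v| ≤ sSup (f '' s) - sInf (f '' s) :=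
      abs_le.2 ⟨by linarith, by linarith⟩
    have t1 : f u * (g u - g v) ≤ Cf * (sSup (g '' s) - sInf (g '' s)) := by
      refine (le_abs_self _).trans ?_
      rw [abs_mul]
      exact mul_le_mul hfu habs1 (abs_nonneg _) hCf0
    have t2 : g v * (f u - f v) ≤ Cg * (sSup (f '' s) - sInf (f '' s)) := by
      refine (le_abs_self _).trans ?_
      rw [abs_mul]
      exact mul_le_mul hgv habs2 (abs_nonneg _) hCg0
    have : f u * g u - f v * g v = f u * (g u - g v) + g v * (f u - f v) := by ring
    rw [hD]; linarith
  have h1 : sSup ((fun t => f t * g t) '' s) ≤ D + sInf ((fun t => f t * g t) '' s) := by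
    apply csSup_le (img_ne ⟨t₀, ht₀⟩)
    rintro z ⟨u, hu, rfl⟩
    have : f u * g u - D ≤ sInf ((fun t => f t * g t) '' s) := by
      apply le_csInf (img_ne ⟨t₀, ht₀⟩)
      rintro w ⟨v, hv, rfl⟩
      have := key u hu v hv
      simp only []
      linarith
    simp only []
    linarith
  linarith

theorem bound_mul {f g : ℝ → ℝ} {Cf Cg : ℝ}
    (hCf : ∀ t ∈ T ∩ Set.Icc a b, |f t| ≤ Cf) (hCg : ∀ t ∈ T ∩ Set.Icc a b, |g t| ≤ Cg)
    (hCg0 : 0 ≤ Cg) :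
    ∀ t ∈ T ∩ Set.Icc a b, |(fun t => f t * g t) t| ≤ Cf * Cg := by
  intro t ht
  simp only [abs_mul]
  exact mul_le_mul (hCf t ht) (hCg t ht) (abs_nonneg _) ((abs_nonneg _).trans (hCf t ht))

theorem UL_mul_le {f g : ℝ → ℝ} {Cf Cg : ℝ}
    (hCf : ∀ t ∈ T ∩ Set.Icc a b, |f t| ≤ Cf) (hCg : ∀ t ∈ T ∩ Set.Icc a b, |g t| ≤ Cg)
    (hα : α ∈ Set.Icc (0:ℝ) 1) (P : TSPartition T a b) :
    upperDSum T (fun t => f t * g t) α P - lowerDSum T (fun t => f t * g t) α P ≤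
      Cg * (upperDSum T f α P - lowerDSum T f α P) +
        Cf * (upperDSum T g α P - lowerDSum T g α P) := by
  rw [upperDSum_eq, upperDSum_eq, upperDSum_eq, lowerDSum_eq, lowerDSum_eq, lowerDSum_eq,
    ← Finset.sum_sub_distrib, ← Finset.sum_sub_distrib, ← Finset.sum_sub_distrib,
    Finset.mul_sum, Finset.mul_sum, ← Finset.sum_add_distrib]
  apply Finset.sum_le_sum
  intro i hi
  rw [Finset.mem_range] at hi
  have hxT := P.mem i (by omega)
  have hyT := P.mem (i+1) (by omega)
  have hax := (pt_mem_Icc P (show i ≤ P.n by omega)).1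
  have hyb := (pt_mem_Icc P (show i + 1 ≤ P.n by omega)).2
  have hxy := P.mono i hi
  have o1 := osc_mul hCf hCg (Ico_cell_sub (T := T) hax hyb) (Ico_cell_ne hxT hxy)
  have o2 := osc_mul hCf hCg (Ioc_cell_sub (T := T) hax hyb) (Ioc_cell_ne hyT hxy)
  have hα0 := hα.1; have hα1 := hα.2
  have hΔ : (0:ℝ) ≤ P.pt (i+1) - P.pt i := by linarith
  unfold pcU pcL
  have c1 := mul_le_mul_of_nonneg_left o1 hα0
  have c2 := mul_le_mul_of_nonneg_left o2 (by linarith : (0:ℝ) ≤ 1 - α)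
  set x := P.pt i
  set y := P.pt (i + 1)
  have main : α * sSup ((fun t => f t * g t) '' (T ∩ Set.Ico x y)) +
        (1 - α) * sSup ((fun t => f t * g t) '' (T ∩ Set.Ioc x y)) -
        (α * sInf ((fun t => f t * g t) '' (T ∩ Set.Ico x y)) +
        (1 - α) * sInf ((fun t => f t * g t) '' (T ∩ Set.Ioc x y))) ≤
      Cg * (α * sSup (f '' (T ∩ Set.Ico x y)) + (1 - α) * sSup (f '' (T ∩ Set.Ioc x y)) -
        (α * sInf (f '' (T ∩ Set.Ico x y)) + (1 - α) * sInf (f '' (T ∩ Set.Ioc x y)))) +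
      Cf * (α * sSup (g '' (T ∩ Set.Ico x y)) + (1 - α) * sSup (g '' (T ∩ Set.Ioc x y)) -
        (α * sInf (g '' (T ∩ Set.Ico x y)) + (1 - α) * sInf (g '' (T ∩ Set.Ioc x y)))) := by
    linarith
  calc (α * sSup ((fun t => f t * g t) '' (T ∩ Set.Ico x y)) +
        (1 - α) * sSup ((fun t => f t * g t) '' (T ∩ Set.Ioc x y))) * (y - x) -
       (α * sInf ((fun t => f t * g t) '' (T ∩ Set.Ico x y)) +
        (1 - α) * sInf ((fun t => f t * g t) '' (T ∩ Set.Ioc x y))) * (y - x)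
      = (α * sSup ((fun t => f t * g t) '' (T ∩ Set.Ico x y)) +
        (1 - α) * sSup ((fun t => f t * g t) '' (T ∩ Set.Ioc x y)) -
        (α * sInf ((fun t => f t * g t) '' (T ∩ Set.Ico x y)) +
        (1 - α) * sInf ((fun t => f t * g t) '' (T ∩ Set.Ioc x y)))) * (y - x) := by ring
    _ ≤ (Cg * (α * sSup (f '' (T ∩ Set.Ico x y)) + (1 - α) * sSup (f '' (T ∩ Set.Ioc x y)) -
        (α * sInf (f '' (T ∩ Set.Ico x y)) + (1 - α) * sInf (f '' (T ∩ Set.Ioc x y)))) +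
      Cf * (α * sSup (g '' (T ∩ Set.Ico x y)) + (1 - α) * sSup (g '' (T ∩ Set.Ioc x y)) -
        (α * sInf (g '' (T ∩ Set.Ico x y)) + (1 - α) * sInf (g '' (T ∩ Set.Ioc x y))))) *
        (y - x) := mul_le_mul_of_nonneg_right main hΔ
    _ = Cg * ((α * sSup (f '' (T ∩ Set.Ico x y)) + (1 - α) * sSup (f '' (T ∩ Set.Ioc x y))) *
          (y - x) - (α * sInf (f '' (T ∩ Set.Ico x y)) +
          (1 - α) * sInf (f '' (T ∩ Set.Ioc x y))) * (y - x)) +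
        Cf * ((α * sSup (g '' (T ∩ Set.Ico x y)) + (1 - α) * sSup (g '' (T ∩ Set.Ioc x y))) *
          (y - x) - (α * sInf (g '' (T ∩ Set.Ico x y)) +
          (1 - α) * sInf (g '' (T ∩ Set.Ioc x y))) * (y - x)) := by ring

theorem lowerDSum_ge_of_refines (hC : ∀ t ∈ T ∩ Set.Icc a b, |φ t| ≤ C)
    (hα : α ∈ Set.Icc (0:ℝ) 1) {R Q : TSPartition T a b} (h : Refines R Q) :
    lowerDSum T φ α Q ≤ lowerDSum T φ α R := by
  rw [lowerDSum_eq_neg, lowerDSum_eq_neg]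
  have := upperDSum_le_of_refines (bound_neg hC) hα h
  linarith

/-! ### Integrability of the product -/

theorem integrable_mul (ha : a ∈ T) (hb : b ∈ T) (hab : a < b) {f g : ℝ → ℝ} {Cf Cg : ℝ}
    (hCf : ∀ t ∈ T ∩ Set.Icc a b, |f t| ≤ Cf) (hCg : ∀ t ∈ T ∩ Set.Icc a b, |g t| ≤ Cg)
    (hα : α ∈ Set.Icc (0:ℝ) 1) (hf : DiamondIntegrable T f α a b)
    (hg : DiamondIntegrable T g α a b) :
    DiamondIntegrable T (fun t => f t * g t) α a b := by
  have ham : a ∈ T ∩ Set.Icc a b := ⟨ha, le_rfl, hab.le⟩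
  have hCf0 : 0 ≤ Cf := (abs_nonneg _).trans (hCf a ham)
  have hCg0 : 0 ≤ Cg := (abs_nonneg _).trans (hCg a ham)
  have hCfg := bound_mul hCf hCg hCg0
  refine le_antisymm (lowerDIntegral_le_upperDIntegral ha hb hab hCfg hα) ?_
  apply le_of_forall_pos_le_add
  intro ε hε
  set δ := ε / (2 * Cf + 2 * Cg + 2) with hδdef
  have hD : (0:ℝ) < 2 * Cf + 2 * Cg + 2 := by linarith
  have hδ : 0 < δ := div_pos hε hD
  obtain ⟨uf, ⟨P₁, rfl⟩, hP₁⟩ := exists_lt_of_csInf_lt (USet_nonempty ha hb hab f α)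
    (show sInf {x | ∃ P : TSPartition T a b, x = upperDSum T f α P} <
      upperDIntegral T f α a b + δ by
        rw [show sInf {x | ∃ P : TSPartition T a b, x = upperDSum T f α P} =
          upperDIntegral T f α a b from rfl]; linarith)
  obtain ⟨ug, ⟨P₂, rfl⟩, hP₂⟩ := exists_lt_of_csInf_lt (USet_nonempty ha hb hab g α)
    (show sInf {x | ∃ P : TSPartition T a b, x = upperDSum T g α P} <
      upperDIntegral T g α a b + δ by
        rw [show sInf {x | ∃ P : TSPartition T a b, x = upperDSum T g α P} =
          upperDIntegral T g α a b from rfl]; linarith)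
  have hLne : ∀ ψ : ℝ → ℝ, {x | ∃ P : TSPartition T a b, x = lowerDSum T ψ α P}.Nonempty :=
    fun ψ => ⟨lowerDSum T ψ α (onePart ha hb hab), onePart ha hb hab, rfl⟩
  obtain ⟨lf, ⟨Q₁, rfl⟩, hQ₁⟩ := exists_lt_of_lt_csSup (hLne f)
    (show lowerDIntegral T f α a b - δ <
      sSup {x | ∃ P : TSPartition T a b, x = lowerDSum T f α P} by
        rw [show sSup {x | ∃ P : TSPartition T a b, x = lowerDSum T f α P} =
          lowerDIntegral T f α a b from rfl]; linarith)
  obtain ⟨lg, ⟨Q₂, rfl⟩, hQ₂⟩ := exists_lt_of_lt_csSup (hLne g)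
    (show lowerDIntegral T g α a b - δ <
      sSup {x | ∃ P : TSPartition T a b, x = lowerDSum T g α P} by
        rw [show sSup {x | ∃ P : TSPartition T a b, x = lowerDSum T g α P} =
          lowerDIntegral T g α a b from rfl]; linarith)
  obtain ⟨R, h1, h2, h3, h4⟩ := exists_common_refinement4 hab P₁ Q₁ P₂ Q₂
  have rf1 : upperDSum T f α R ≤ upperDSum T f α P₁ := upperDSum_le_of_refines hCf hα h1
  have rf2 : lowerDSum T f α Q₁ ≤ lowerDSum T f α R := lowerDSum_ge_of_refines hCf hα h2
  have rg1 : upperDSum T g α R ≤ upperDSum T g α P₂ := upperDSum_le_of_refines hCg hα h3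
  have rg2 : lowerDSum T g α Q₂ ≤ lowerDSum T g α R := lowerDSum_ge_of_refines hCg hα h4
  have hfeq : lowerDIntegral T f α a b = upperDIntegral T f α a b := hf
  have hgeq : lowerDIntegral T g α a b = upperDIntegral T g α a b := hg
  have oscf : upperDSum T f α R - lowerDSum T f α R ≤ 2 * δ := by linarith
  have oscg : upperDSum T g α R - lowerDSum T g α R ≤ 2 * δ := by linarith
  have hosc := UL_mul_le hCf hCg hα R
  have hup : upperDIntegral T (fun t => f t * g t) α a b ≤
      upperDSum T (fun t => f t * g t) α R := upperDIntegral_le_upperDSum hCfg hα R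
  have hlo : lowerDSum T (fun t => f t * g t) α R ≤
      lowerDIntegral T (fun t => f t * g t) α a b := lowerDSum_le_lowerDIntegral hCfg hα R
  have m1 : Cg * (upperDSum T f α R - lowerDSum T f α R) ≤ Cg * (2 * δ) :=
    mul_le_mul_of_nonneg_left oscf hCg0
  have m2 : Cf * (upperDSum T g α R - lowerDSum T g α R) ≤ Cf * (2 * δ) :=
    mul_le_mul_of_nonneg_left oscg hCf0
  have h5 : (2 * Cg + 2 * Cf) * δ ≤ (2 * Cf + 2 * Cg + 2) * δ :=
    mul_le_mul_of_nonneg_right (by linarith) hδ.le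
  have h6 : (2 * Cf + 2 * Cg + 2) * δ = ε := by
    rw [hδdef]; field_simp
  nlinarith [hup, hosc, hlo, m1, m2, h5, h6]

end DMVT

/-- Forward jump operator on a time scale. -/

noncomputable def tsSigma (T : Set ℝ) (t : ℝ) : ℝ :=
  if (T ∩ Set.Ioi t).Nonempty then sInf (T ∩ Set.Ioi t) else t

/-- Backward jump operator on a time scale. -/

noncomputable def tsRho (T : Set ℝ) (t : ℝ) : ℝ :=
  if (T ∩ Set.Iio t).Nonempty then sSup (T ∩ Set.Iio t) else t

/-- The delta derivative of `f` at `t` equals `L`. -/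
def HasDeltaDerivAt (T : Set ℝ) (f : ℝ → ℝ) (t L : ℝ) : Prop :=
  ∀ ε > (0 : ℝ), ∃ δ > (0 : ℝ), ∀ s ∈ T, |t - s| < δ →
    |f (tsSigma T t) - f s - L * (tsSigma T t - s)| ≤ ε * |tsSigma T t - s|

/-- The nabla derivative of `f` at `t` equals `L`. -/
def HasNablaDerivAt (T : Set ℝ) (f : ℝ → ℝ) (t L : ℝ) : Prop :=
  ∀ ε > (0 : ℝ), ∃ δ > (0 : ℝ), ∀ s ∈ T, |t - s| < δ →
    |f (tsRho T t) - f s - L * (tsRho T t - s)| ≤ ε * |tsRho T t - s|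

/-- first mean value theorem for diamond-alpha integrals. -/
theorem diamond_mean_value_integral (T : Set ℝ) (hT : T.Nonempty) (hTc : IsClosed T)
    (a b : ℝ) (ha : a ∈ T) (hb : b ∈ T) (hab : a < b)
    (α : ℝ) (hα : α ∈ Set.Icc (0 : ℝ) 1) (f g : ℝ → ℝ)
    (hfb : ∃ C, ∀ t ∈ T ∩ Set.Icc a b, |f t| ≤ C)
    (hgb : ∃ C, ∀ t ∈ T ∩ Set.Icc a b, |g t| ≤ C)
    (hf : DiamondIntegrable T f α a b) (hg : DiamondIntegrable T g α a b)
    (hg0 : ∀ t ∈ T ∩ Set.Icc a b, 0 ≤ g t) :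
    ∃ K ∈ Set.Icc (sInf (f '' (T ∩ Set.Icc a b))) (sSup (f '' (T ∩ Set.Icc a b))),
      DiamondIntegrable T (fun t => f t * g t) α a b ∧
        diamondIntegral T (fun t => f t * g t) α a b = K * diamondIntegral T g α a b := by
  obtain ⟨Cf, hCf⟩ := hfb
  obtain ⟨Cg, hCg⟩ := hgb
  have ham : a ∈ T ∩ Set.Icc a b := ⟨ha, le_rfl, hab.le⟩
  have hne : (T ∩ Set.Icc a b).Nonempty := ⟨a, ham⟩
  have hCf0 : (0:ℝ) ≤ Cf := (abs_nonneg _).trans (hCf a ham)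
  have hCg0 : (0:ℝ) ≤ Cg := (abs_nonneg _).trans (hCg a ham)
  have hsub : T ∩ Set.Icc a b ⊆ T ∩ Set.Icc a b := fun _ h => h
  have hmem : ∀ t ∈ T ∩ Set.Icc a b,
      sInf (f '' (T ∩ Set.Icc a b)) ≤ f t ∧ f t ≤ sSup (f '' (T ∩ Set.Icc a b)) := fun t ht =>
    ⟨csInf_le (DMVT.img_bddBelow hCf hsub) ⟨t, ht, rfl⟩,
     le_csSup (DMVT.img_bddAbove hCf hsub) ⟨t, ht, rfl⟩⟩
  have hmM : sInf (f '' (T ∩ Set.Icc a b)) ≤ sSup (f '' (T ∩ Set.Icc a b)) :=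
    (hmem a ham).1.trans (hmem a ham).2
  have hMabs : |sSup (f '' (T ∩ Set.Icc a b))| ≤ Cf :=
    abs_le.2 ⟨DMVT.neg_le_sSup_img hCf hsub hne, DMVT.sSup_img_le hCf hsub hne⟩
  have hmabs : |sInf (f '' (T ∩ Set.Icc a b))| ≤ Cf :=
    abs_le.2 ⟨DMVT.neg_le_sInf_img hCf hsub hne, DMVT.sInf_img_le hCf hsub hne⟩
  have hCfg := DMVT.bound_mul hCf hCg hCg0
  have hint : DiamondIntegrable T (fun t => f t * g t) α a b :=
    DMVT.integrable_mul ha hb hab hCf hCg hα hf hg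
  have hMg : ∀ t ∈ T ∩ Set.Icc a b,
      |(fun t => sSup (f '' (T ∩ Set.Icc a b)) * g t) t| ≤ Cf * Cg := by
    intro t ht
    simp only [abs_mul]
    exact mul_le_mul hMabs (hCg t ht) (abs_nonneg _) hCf0
  have hmg : ∀ t ∈ T ∩ Set.Icc a b,
      |(fun t => sInf (f '' (T ∩ Set.Icc a b)) * g t) t| ≤ Cf * Cg := by
    intro t ht
    simp only [abs_mul]
    exact mul_le_mul hmabs (hCg t ht) (abs_nonneg _) hCf0
  have hup : upperDIntegral T (fun t => f t * g t) α a b ≤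
      upperDIntegral T (fun t => sSup (f '' (T ∩ Set.Icc a b)) * g t) α a b :=
    DMVT.upperDIntegral_mono ha hb hab hCfg hMg
      (fun t ht => mul_le_mul_of_nonneg_right (hmem t ht).2 (hg0 t ht)) hα
  have hMgint := (DMVT.const_mul_integrals ha hb hab (α := α) hg
    (sSup (f '' (T ∩ Set.Icc a b)))).1
  have hlow : lowerDIntegral T (fun t => sInf (f '' (T ∩ Set.Icc a b)) * g t) α a b ≤
      lowerDIntegral T (fun t => f t * g t) α a b :=
    DMVT.lowerDIntegral_mono ha hb hab hmg hCfg
      (fun t ht => mul_le_mul_of_nonneg_right (hmem t ht).1 (hg0 t ht)) hα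
  have hmgint := (DMVT.const_mul_integrals ha hb hab (α := α) hg
    (sInf (f '' (T ∩ Set.Icc a b)))).2
  have hgnn : 0 ≤ lowerDIntegral T g α a b :=
    DMVT.lowerDIntegral_nonneg ha hb hab hCg hα hg0
  have hgeq : lowerDIntegral T g α a b = upperDIntegral T g α a b := hg
  have hG0 : 0 ≤ upperDIntegral T g α a b := hgeq ▸ hgnn
  have hIeq : lowerDIntegral T (fun t => f t * g t) α a b =
      upperDIntegral T (fun t => f t * g t) α a b := hint
  have h1 : upperDIntegral T (fun t => f t * g t) α a b ≤
      sSup (f '' (T ∩ Set.Icc a b)) * upperDIntegral T g α a b := hup.trans (le_of_eq hMgint)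
  have h2 : sInf (f '' (T ∩ Set.Icc a b)) * upperDIntegral T g α a b ≤
      upperDIntegral T (fun t => f t * g t) α a b := by
    rw [← hmgint, ← hIeq] at *
    exact hlow
  rcases eq_or_lt_of_le hG0 with hG | hG
  · refine ⟨sInf (f '' (T ∩ Set.Icc a b)), ⟨le_rfl, hmM⟩, hint, ?_⟩
    show upperDIntegral T (fun t => f t * g t) α a b =
      sInf (f '' (T ∩ Set.Icc a b)) * upperDIntegral T g α a b
    rw [← hG] at h1 h2 ⊢
    rw [mul_zero] at h1 h2 ⊢
    linarith
  · refine ⟨upperDIntegral T (fun t => f t * g t) α a b / upperDIntegral T g α a b,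
      ⟨?_, ?_⟩, hint, ?_⟩
    · rw [le_div_iff₀ hG]; exact h2
    · rw [div_le_iff₀ hG]; exact h1
    · show upperDIntegral T (fun t => f t * g t) α a b =
        upperDIntegral T (fun t => f t * g t) α a b / upperDIntegral T g α a b *
          upperDIntegral T g α a b
      rw [div_mul_cancel₀ _ hG.ne']
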